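/- Let S be a ⟨∨,0⟩-semilattice, let κ and λ be infinite cardinals, let (a_ξ)_{ξ<κ} be an increasing family in S with a_0 = 0 and let (b_η)_{η<λ} be a decreasing family in S with a_ξ ≤ b_η for all ξ < κ and η < λ. Let ν denote the restriction of σ to V_{κ,λ}, let e_{κ,λ} : U_{κ,λ} ↪ V_{κ,λ} be the inclusion map, let s_{κ,λ} : U_{κ,λ} → U_{κ,λ} be the map ⟨x0,x1,x2⟩ ↦ ⟨x0,x2,x1⟩, and let e'_{κ,λ} = e_{κ,λ} ∘ s_{κ,λ}. Suppose there exist a meet-semilattice L, meet-homomorphisms f, f' : V_{κ,λ} → L, and an order-preserving map ρ : L → S such that f ∘ e_{κ,λ} = f' ∘ e'_{κ,λ} and ρ ∘ f = ρ ∘ f' = ν. Then there exists c ∈ S such that a_ξ ≤ c ≤ b_η for all ξ < κ and η < λ. -/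

import Mathlib

open Set Cardinal

/-- Membership in the Boolean subalgebra of the powerset of `P` generated by the
lower subsets of `P`: the smallest family of subsets of `P` containing all lower
sets and closed under complementation and (binary) union (hence also under binary
intersection, and containing `∅` and `P`). -/
inductive IntMem (P : Type*) [Preorder P] : Set P → Prop
  | lower (s : Set P) : IsLowerSet s → IntMem P s
  | compl (s : Set P) : IntMem P s → IntMem P sᶜ
  | union (s t : Set P) : IntMem P s → IntMem P t → IntMem P (s ∪ t)

/-- `Int P`: the Boolean subalgebra of the powerset of `P` generated by the lower subsets
of `P`, viewed as a set of subsets of `P`. -/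
def IntP (P : Type*) [Preorder P] : Set (Set P) := {s | IntMem P s}

open Classical in
/-- `χ_o` : sends a subset of `{β | β < o}` to `false` if it is bounded (contained in some
`α < o`) and to `true` otherwise. -/
noncomputable def chiO (o : Ordinal) (x : Set ↥(Set.Iio o)) : Bool :=
  if ∃ α < o, ∀ β ∈ x, (β : Ordinal) < α then false else true

/-- The ambient Boolean algebra `(Set κ) × (Set λ) × (Set λ)` in which
`A_{κ,λ} = Int κ × Int λ × Int λ` lives. -/
abbrev Amb (κ lam : Cardinal) : Type _ :=
  Set ↥(Set.Iio κ.ord) × Set ↥(Set.Iio lam.ord) × Set ↥(Set.Iio lam.ord)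

/-- `A_{κ,λ} = Int κ × Int λ × Int λ`. -/
def ASet (κ lam : Cardinal) : Set (Amb κ lam) :=
  {p | p.1 ∈ IntP ↥(Set.Iio κ.ord) ∧ p.2.1 ∈ IntP ↥(Set.Iio lam.ord) ∧
       p.2.2 ∈ IntP ↥(Set.Iio lam.ord)}

/-- `U_{κ,λ} = {⟨x0,x1,x2⟩ ∈ A_{κ,λ} : χ_κ(x0) = χ_λ(x1) = χ_λ(x2)}`. -/
def USet (κ lam : Cardinal) : Set (Amb κ lam) :=
  {p ∈ ASet κ lam | chiO κ.ord p.1 = chiO lam.ord p.2.1 ∧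
    chiO lam.ord p.2.1 = chiO lam.ord p.2.2}

/-- `V_{κ,λ} = {⟨x0,x1,x2⟩ ∈ A_{κ,λ} : χ_κ(x0) = χ_λ(x1)}`. -/
def VSet (κ lam : Cardinal) : Set (Amb κ lam) :=
  {p ∈ ASet κ lam | chiO κ.ord p.1 = chiO lam.ord p.2.1}

/-- `P*_{κ,λ} = {⟨x0,x1,x2⟩ ∈ A_{κ,λ} : χ_κ(x0) = 0 or x1 ∪ x2 ≠ ∅}`. -/
def PstarSet (κ lam : Cardinal) : Set (Amb κ lam) :=
  {p ∈ ASet κ lam | chiO κ.ord p.1 = false ∨ p.2.1 ∪ p.2.2 ≠ ∅}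

/-- `P_{κ,λ} = {⟨x0,x1,x2⟩ ∈ A_{κ,λ} : χ_κ(x0) = χ_λ(x1) ∨ χ_λ(x2)}`. -/
def PkSet (κ lam : Cardinal) : Set (Amb κ lam) :=
  {p ∈ ASet κ lam | chiO κ.ord p.1 = chiO lam.ord p.2.1 ⊔ chiO lam.ord p.2.2}

open Classical in
/-- The map `σ = σ_{⃗a,⃗b} : P*_{κ,λ} → S` : `σ(⟨x0,x1,x2⟩) = a_{sup x0}` if
`x1 ∪ x2 = ∅` (in which case `x0` is bounded, so `sup x0 < κ`), and
`σ(⟨x0,x1,x2⟩) = b_{min (x1 ∪ x2)}` otherwise.  (Outside of `P*_{κ,λ}` the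
value of this function is irrelevant; junk value `⊥` is used when the
corresponding index is out of range.) -/
noncomputable def sigmaM (κ lam : Cardinal) {S : Type*} [SemilatticeSup S] [OrderBot S]
    (a : ↥(Set.Iio κ.ord) → S) (b : ↥(Set.Iio lam.ord) → S) (p : Amb κ lam) : S :=
  if p.2.1 ∪ p.2.2 = ∅ then
    if h : sSup (Subtype.val '' p.1) < κ.ord then a ⟨sSup (Subtype.val '' p.1), h⟩ else ⊥
  else
    if h : sInf (Subtype.val '' (p.2.1 ∪ p.2.2)) < lam.ord then
      b ⟨sInf (Subtype.val '' (p.2.1 ∪ p.2.2)), h⟩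
    else ⊥

/-- The measure `μ = μ_{⃗a,⃗b}` on `P_{κ,λ}` : `μ(x, y) = σ(x \ y)`. -/
noncomputable def muM (κ lam : Cardinal) {S : Type*} [SemilatticeSup S] [OrderBot S]
    (a : ↥(Set.Iio κ.ord) → S) (b : ↥(Set.Iio lam.ord) → S) (p q : Amb κ lam) : S :=
  sigmaM κ lam a b (p \ q)

/-- The symmetry `s_{κ,λ} : ⟨x0,x1,x2⟩ ↦ ⟨x0,x2,x1⟩`. -/
def swapM (κ lam : Cardinal) (p : Amb κ lam) : Amb κ lam := (p.1, p.2.2, p.2.1)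


section Helpers

variable {o : Ordinal}

lemma intMem_univ (P : Type*) [Preorder P] : IntMem P Set.univ :=
  .lower _ isLowerSet_univ

lemma intMem_empty (P : Type*) [Preorder P] : IntMem P ∅ :=
  .lower _ isLowerSet_empty

lemma intMem_iic (ξ : ↥(Set.Iio o)) :
    IntMem ↥(Set.Iio o) {β : ↥(Set.Iio o) | (β : Ordinal) ≤ ξ} :=
  .lower _ (fun _a b hba ha => le_trans (Subtype.coe_le_coe.mpr hba) ha)

lemma intMem_ici (η : ↥(Set.Iio o)) :
    IntMem ↥(Set.Iio o) {β : ↥(Set.Iio o) | (η : Ordinal) ≤ β} := by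
  have h : {β : ↥(Set.Iio o) | (η : Ordinal) ≤ β}
      = {β : ↥(Set.Iio o) | (β : Ordinal) < η}ᶜ := by
    ext β; simp [not_lt]
  rw [h]
  exact .compl _ (.lower _ (fun _a b hba ha =>
    lt_of_le_of_lt (Subtype.coe_le_coe.mpr hba) ha))

lemma chiO_empty (h : 0 < o) : chiO o (∅ : Set ↥(Set.Iio o)) = false := by
  rw [chiO, if_pos ⟨0, h, by simp⟩]

lemma chiO_univ : chiO o (Set.univ : Set ↥(Set.Iio o)) = true := by
  rw [chiO, if_neg]
  rintro ⟨α, hα, h⟩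
  exact absurd (h ⟨α, hα⟩ trivial) (lt_irrefl α)

lemma chiO_iic (h : Order.IsSuccLimit o) (ξ : ↥(Set.Iio o)) :
    chiO o {β : ↥(Set.Iio o) | (β : Ordinal) ≤ ξ} = false := by
  rw [chiO, if_pos]
  refine ⟨(ξ : Ordinal) + 1, (by rw [Ordinal.add_one_eq_succ]; exact h.succ_lt ξ.2), fun β hβ => lt_of_le_of_lt hβ ?_⟩
  exact lt_add_one (ξ : Ordinal)

lemma chiO_ici (η : ↥(Set.Iio o)) :
    chiO o {β : ↥(Set.Iio o) | (η : Ordinal) ≤ β} = true := by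
  rw [chiO, if_neg]
  rintro ⟨α, hα, h⟩
  have hm : max α (η : Ordinal) < o := max_lt hα η.2
  have := h ⟨max α (η : Ordinal), hm⟩ (show (η : Ordinal) ≤ max α η from le_max_right _ _)
  exact absurd (lt_of_le_of_lt (le_max_left _ _) this) (lt_irrefl α)

lemma image_iic (ξ : ↥(Set.Iio o)) :
    Subtype.val '' {β : ↥(Set.Iio o) | (β : Ordinal) ≤ ξ} = Set.Iic (ξ : Ordinal) := by
  ext x
  constructor
  · rintro ⟨y, hy, rfl⟩; exact hy
  · intro hx; exact ⟨⟨x, Set.mem_Iio.mpr (lt_of_le_of_lt hx ξ.2)⟩, hx, rfl⟩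

lemma image_ici (η : ↥(Set.Iio o)) :
    Subtype.val '' {β : ↥(Set.Iio o) | (η : Ordinal) ≤ β} = Set.Ico (η : Ordinal) o := by
  ext x
  constructor
  · rintro ⟨y, hy, rfl⟩; exact ⟨hy, y.2⟩
  · rintro ⟨h1, h2⟩; exact ⟨⟨x, h2⟩, h1, rfl⟩

end Helpers

section SigmaHelpers

variable (κ lam : Cardinal) {S : Type*} [SemilatticeSup S] [OrderBot S]
  (a : ↥(Set.Iio κ.ord) → S) (b : ↥(Set.Iio lam.ord) → S)

lemma sigmaM_a (ξ : ↥(Set.Iio κ.ord)) :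
    sigmaM κ lam a b ({β | (β : Ordinal) ≤ ξ}, ∅, ∅) = a ξ := by
  rw [sigmaM, if_pos (by simp)]
  simp only [image_iic, csSup_Iic]
  rw [dif_pos (show (ξ : Ordinal) < κ.ord from ξ.2)]

lemma sigmaM_b (η : ↥(Set.Iio lam.ord)) :
    sigmaM κ lam a b (Set.univ, {β | (η : Ordinal) ≤ β}, ∅) = b η := by
  have hne : ({β : ↥(Set.Iio lam.ord) | (η : Ordinal) ≤ β} ∪ ∅ : Set _) ≠ ∅ := by
    intro h
    have : η ∈ ({β : ↥(Set.Iio lam.ord) | (η : Ordinal) ≤ β} ∪ ∅ : Set _) :=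
      Or.inl (show (η : Ordinal) ≤ η from le_refl _)
    rw [h] at this
    exact this
  rw [sigmaM, if_neg hne]
  have h1 : sInf (Set.Ico (η : Ordinal) lam.ord) = (η : Ordinal) :=
    IsLeast.csInf_eq ⟨⟨le_refl _, η.2⟩, fun x hx => hx.1⟩
  simp only [Set.union_empty, image_ici, h1]
  rw [dif_pos (show (η : Ordinal) < lam.ord from η.2)]

end SigmaHelpers

/-- Let `κ, λ` be infinite cardinals, `S` a `⟨∨,0⟩`-semilattice,
`(a_ξ)_{ξ<κ}` increasing with `a_0 = 0`, `(b_η)_{η<λ}` decreasing, with `a_ξ ≤ b_η` for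
all `ξ, η`.  Let `ν` be the restriction of `σ` to `V_{κ,λ}`.  Suppose there are a
meet-semilattice `L`, meet-homomorphisms `f, f' : V_{κ,λ} → L` and an order-preserving
map `ρ : L → S` with `f ∘ e_{κ,λ} = f' ∘ e'_{κ,λ}` (i.e. `f u = f' (s_{κ,λ} u)` on
`U_{κ,λ}`) and `ρ ∘ f = ρ ∘ f' = ν` on `V_{κ,λ}`.  Then there exists `c ∈ S` with
`a_ξ ≤ c ≤ b_η` for all `ξ < κ` and `η < λ`. -/
theorem interpolation_of_two_dim_amalgamation.{u} (κ lam : Cardinal)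
    (hκ : ℵ₀ ≤ κ) (hlam : ℵ₀ ≤ lam)
    {S : Type*} [SemilatticeSup S] [OrderBot S]
    (a : ↥(Set.Iio κ.ord) → S) (b : ↥(Set.Iio lam.ord) → S)
    (ha : Monotone a) (hb : Antitone b)
    (ha0 : ∀ ξ : ↥(Set.Iio κ.ord), (ξ : Ordinal) = 0 → a ξ = ⊥)
    (hab : ∀ ξ η, a ξ ≤ b η)
    (L : Type u) [SemilatticeInf L] (f f' : Amb κ lam → L)
    (hf : ∀ x ∈ VSet κ lam, ∀ y ∈ VSet κ lam, f (x ⊓ y) = f x ⊓ f y)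
    (hf' : ∀ x ∈ VSet κ lam, ∀ y ∈ VSet κ lam, f' (x ⊓ y) = f' x ⊓ f' y)
    (ρ : L → S) (hρ : Monotone ρ)
    (hcomm : ∀ u ∈ USet κ lam, f u = f' (swapM κ lam u))
    (hρf : ∀ v ∈ VSet κ lam, ρ (f v) = sigmaM κ lam a b v)
    (hρf' : ∀ v ∈ VSet κ lam, ρ (f' v) = sigmaM κ lam a b v) :
    ∃ c : S, (∀ ξ, a ξ ≤ c) ∧ ∀ η, c ≤ b η := by

  have hκl : Order.IsSuccLimit κ.ord := Cardinal.isSuccLimit_ord hκ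
  have hlaml : Order.IsSuccLimit lam.ord := Cardinal.isSuccLimit_ord hlam
  -- key elements
  set v : Amb κ lam := (Set.univ, Set.univ, ∅) with hv
  have hvV : v ∈ VSet κ lam := by
    refine ⟨⟨intMem_univ _, intMem_univ _, intMem_empty _⟩, ?_⟩
    simp only [hv, chiO_univ]
  refine ⟨ρ (f v ⊓ f' v), ?_, ?_⟩
  · -- lower bounds
    intro ξ
    set u : Amb κ lam := ({β | (β : Ordinal) ≤ ξ}, ∅, ∅) with hu
    have huV : u ∈ VSet κ lam := by
      refine ⟨⟨intMem_iic _, intMem_empty _, intMem_empty _⟩, ?_⟩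
      simp only [hu, chiO_iic hκl, chiO_empty hlaml.pos]
    have huU : u ∈ USet κ lam := by
      refine ⟨huV.1, ?_, ?_⟩ <;>
        simp only [hu, chiO_iic hκl, chiO_empty hlaml.pos]
    have huv : u ⊓ v = u := by
      apply inf_eq_left.mpr
      exact ⟨Set.subset_univ _, Set.subset_univ _, le_refl _⟩
    have h1 : f u ≤ f v := by
      have := hf u huV v hvV
      rw [huv] at this
      rw [this]; exact inf_le_right
    have h2 : f u = f' u := by
      have := hcomm u huU
      simpa [swapM, hu] using this
    have h3 : f' u ≤ f' v := by
      have := hf' u huV v hvV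
      rw [huv] at this
      rw [this]; exact inf_le_right
    have h4 : f u ≤ f v ⊓ f' v := le_inf h1 (h2 ▸ h3)
    have := hρ h4
    rwa [hρf u huV, hu, sigmaM_a] at this
  · -- upper bounds
    intro η
    set t : Amb κ lam := (Set.univ, {β | (η : Ordinal) ≤ β}, Set.univ) with ht
    have htV : t ∈ VSet κ lam := by
      refine ⟨⟨intMem_univ _, intMem_ici _, intMem_univ _⟩, ?_⟩
      simp only [ht, chiO_univ, chiO_ici]
    have htU : t ∈ USet κ lam := by
      refine ⟨htV.1, ?_, ?_⟩ <;> simp only [ht, chiO_univ, chiO_ici]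
    set t' : Amb κ lam := (Set.univ, Set.univ, {β | (η : Ordinal) ≤ β}) with ht'
    have ht'V : t' ∈ VSet κ lam := by
      refine ⟨⟨intMem_univ _, intMem_univ _, intMem_ici _⟩, ?_⟩
      simp only [ht', chiO_univ]
    have hswap : swapM κ lam t = t' := rfl
    have h5 : f t = f' t' := by rw [hcomm t htU, hswap]
    have hvt' : v ⊓ t' = v := by
      apply inf_eq_left.mpr
      exact ⟨le_refl _, le_refl _, Set.empty_subset _⟩
    have h6 : f' v ≤ f' t' := by
      have := hf' v hvV t' ht'V
      rw [hvt'] at this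
      rw [this]; exact inf_le_right
    set m : Amb κ lam := (Set.univ, {β | (η : Ordinal) ≤ β}, ∅) with hm
    have hmV : m ∈ VSet κ lam := by
      refine ⟨⟨intMem_univ _, intMem_ici _, intMem_empty _⟩, ?_⟩
      simp only [hm, chiO_univ, chiO_ici]
    have hvtm : v ⊓ t = m := by
      refine Prod.ext ?_ (Prod.ext ?_ ?_) <;> simp [hv, ht, hm]
    have h7 : f v ⊓ f' v ≤ f m := by
      have hle : f v ⊓ f' v ≤ f v ⊓ f t :=
        inf_le_inf_left _ (by rw [h5]; exact h6)
      calc f v ⊓ f' v ≤ f v ⊓ f t := hle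
        _ = f (v ⊓ t) := (hf v hvV t htV).symm
        _ = f m := by rw [hvtm]
    have := hρ h7
    rwa [hρf m hmV, hm, sigmaM_b] at this
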